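/- Let f : ℝ → ℝ satisfy: for all x, y ∈ ℝ, z ∈ [0,1], γ ∈ [0,1), f(γ(z x + (1−z) y)) = f(γ(z f(x) + (1−z) f(y))). If there exist a < b with f(a) = f(b), then f is constant on the open interval (a, b). -/

import Mathlib

/-- If `f : ℝ → ℝ` satisfies the functional equation and
`f a = f b` for some `a < b`, then `f` is constant on the open interval `(a, b)`. -/
theorem stmt3 (f : ℝ → ℝ)
    (h1 : ∀ x y z γ : ℝ, z ∈ Set.Icc (0:ℝ) 1 → γ ∈ Set.Ico (0:ℝ) 1 →
      f (γ * (z * x + (1 - z) * y)) = f (γ * (z * f x + (1 - z) * f y)))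
    (a b : ℝ) (hab : a < b) (hfab : f a = f b) :
    ∀ x ∈ Set.Ioo a b, ∀ y ∈ Set.Ioo a b, f x = f y := by
  have hba : (0:ℝ) < b - a := by linarith
  have L : ∀ u ∈ Set.Ioo a b, ∀ γ ∈ Set.Ico (0:ℝ) 1, f (γ * u) = f (γ * f a) := by
    intro u hu γ hγ
    set z : ℝ := (b - u) / (b - a) with hz
    have hz0 : 0 ≤ z := by
      apply div_nonneg <;> [linarith [hu.2]; linarith]
    have hz1 : z ≤ 1 := by
      rw [div_le_one hba]; linarith [hu.1]
    have hrep : z * a + (1 - z) * b = u := by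
      have hzm : z * (b - a) = b - u := by rw [hz]; exact div_mul_cancel₀ _ (ne_of_gt hba)
      linear_combination -hzm
    have := h1 a b z γ ⟨hz0, hz1⟩ hγ
    rw [hrep, ← hfab] at this
    have : f (γ * u) = f (γ * (z * f a + (1 - z) * f a)) := this
    rw [show z * f a + (1 - z) * f a = f a by ring] at this
    exact this
  have key : ∀ x ∈ Set.Ioo a b, ∀ γ : ℝ, 0 < γ → γ < 1 → x / γ ∈ Set.Ioo a b →
      f x = f (γ * f a) := by
    intro x hx γ hγ0 hγ1 hxγ
    have hxe : γ * (x / γ) = x := by field_simp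
    calc f x = f (γ * (x / γ)) := by rw [hxe]
    _ = f (γ * f a) := L _ hxγ γ ⟨le_of_lt hγ0, hγ1⟩
  have bound : ∀ x ∈ Set.Ioo a b, ∃ t : ℝ, 0 ≤ t ∧ t < 1 ∧
      ∀ γ : ℝ, t < γ → γ < 1 → x / γ ∈ Set.Ioo a b := by
    intro x hx
    obtain ⟨hxa, hxb⟩ := hx
    rcases lt_trichotomy x 0 with hx0 | hx0 | hx0
    · -- x < 0, so a < 0; use t = x / a
      have ha0 : a < 0 := lt_trans hxa hx0
      refine ⟨x / a, ?_, ?_, ?_⟩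
      · exact le_of_lt (div_pos_of_neg_of_neg hx0 ha0)
      · rw [div_lt_one_iff]; right; right; exact ⟨ha0, hxa⟩
      · intro γ htγ hγ1
        have hγ0 : 0 < γ := lt_of_le_of_lt (le_of_lt (div_pos_of_neg_of_neg hx0 ha0)) htγ
        have h1' : a < x / γ := by
          rw [lt_div_iff₀ hγ0]
          have : x / a * a > γ * a := by
            exact (mul_lt_mul_right_of_neg ha0).mpr htγ
          rw [div_mul_cancel₀ x (ne_of_lt ha0)] at this
          linarith
        have h2' : x / γ < b := by
          have : x / γ < x := by
            rw [div_lt_iff₀ hγ0]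
            nlinarith
          linarith
        exact ⟨h1', h2'⟩
    · -- x = 0
      refine ⟨0, le_refl _, one_pos, ?_⟩
      intro γ htγ hγ1
      simp [hx0]
      constructor <;> [linarith; linarith]
    · -- x > 0, so b > 0; use t = x / b
      have hb0 : 0 < b := lt_trans hx0 hxb
      refine ⟨x / b, ?_, ?_, ?_⟩
      · positivity
      · rw [div_lt_one hb0]; exact hxb
      · intro γ htγ hγ1
        have hγ0 : 0 < γ := lt_of_le_of_lt (by positivity) htγ
        have h2' : x / γ < b := by
          rw [div_lt_iff₀ hγ0]
          have := (mul_lt_mul_iff_of_pos_right hb0).mpr htγ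
          rw [div_mul_cancel₀ x (ne_of_gt hb0)] at this
          linarith [this]
        have h1' : a < x / γ := by
          have : x < x / γ := by
            rw [lt_div_iff₀ hγ0]; nlinarith
          linarith
        exact ⟨h1', h2'⟩
  intro x hx y hy
  obtain ⟨t1, ht10, ht11, ht1⟩ := bound x hx
  obtain ⟨t2, ht20, ht21, ht2⟩ := bound y hy
  set γ : ℝ := (max t1 t2 + 1) / 2 with hγdef
  have hm1 : max t1 t2 < 1 := max_lt ht11 ht21
  have hγ1 : γ < 1 := by rw [hγdef]; linarith
  have hγt1 : t1 < γ := by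
    have := le_max_left t1 t2; rw [hγdef]; linarith [max_lt ht11 ht21]
  have hγt2 : t2 < γ := by
    have := le_max_right t1 t2; rw [hγdef]; linarith
  have hγ0 : 0 < γ := lt_of_le_of_lt ht10 hγt1
  calc f x = f (γ * f a) := key x hx γ hγ0 hγ1 (ht1 γ hγt1 hγ1)
  _ = f y := (key y hy γ hγ0 hγ1 (ht2 γ hγt2 hγ1)).symm
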